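/- Let α ≥ 0, let x̃ : E → ℝ≥0 be capacities with x̃(e) ≥ α for every e ∈ H, let y be the induced tree-edge capacities, and let F ⊆ H. If ℓ is the number of shattered components of Q_F, then Σ_{f ∈ M^{-1}(F)} y(f) ≥ α · ℓ. -/

import Mathlib

open scoped Classical

/-- The edges of `H` with exactly one endpoint in `S` (the cut `δ_H(S)`).
Edges are abstract objects of type `E` with endpoint maps `g₁ g₂ : E → V`. -/
noncomputable def cutEdges {V E : Type*} (g₁ g₂ : E → V) (H : Finset E) (S : Finset V) :
    Finset E :=
  H.filter fun e => (g₁ e ∈ S) ≠ (g₂ e ∈ S)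

/-- `u` and `v` are connected by a path using only edges of `H`. -/
def ConnectedIn {V E : Type*} (g₁ g₂ : E → V) (H : Finset E) (u v : V) : Prop :=
  Relation.ReflTransGen (fun a b => ∃ e ∈ H, (g₁ e = a ∧ g₂ e = b) ∨ (g₁ e = b ∧ g₂ e = a)) u v

/-- `u` and `v` are `p`-edge-connected in `H`: for every `D ⊆ H` with `|D| ≤ p - 1`,
`u` and `v` are connected in `H \ D`. -/
def PEdgeConnected {V E : Type*} (g₁ g₂ : E → V) (p : ℕ) (H : Finset E) (u v : V) : Prop :=
  ∀ D : Finset E, D ⊆ H → D.card ≤ p - 1 → ConnectedIn g₁ g₂ (H \ D) u v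

/-- `u` and `v` are `(p,q)`-flex-connected in `H` (with unsafe edge set `Unsafe`):
for every `U ⊆ Unsafe` with `|U| ≤ q`, `u` and `v` are `p`-edge-connected in `H \ U`. -/
def FlexConnected {V E : Type*} (g₁ g₂ : E → V) (Unsafe : Finset E) (p q : ℕ)
    (H : Finset E) (u v : V) : Prop :=
  ∀ U : Finset E, U ⊆ Unsafe → U.card ≤ q → PEdgeConnected g₁ g₂ p (H \ U) u v

/-- `(t₁, t₂ : TE → TV)` describes a (multi)graph which is a tree: it is connected and
every edge is a bridge. -/
def IsTree' {TV TE : Type*} [Fintype TE] (t₁ t₂ : TE → TV) : Prop :=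
  (∀ a b : TV, ConnectedIn t₁ t₂ Finset.univ a b) ∧
    ∀ f : TE, ¬ ConnectedIn t₁ t₂ (Finset.univ \ {f}) (t₁ f) (t₂ f)

/-- `V_f`: the `M1`-images of the leaves (elements of `L`) lying in the connected component
of the tree with `f` deleted that contains the endpoint `t₁ f`. -/
noncomputable def compVerts {V TV TE : Type*} [Fintype TE] (t₁ t₂ : TE → TV)
    (M1 : TV → V) (L : Finset TV) (f : TE) : Finset V :=
  (L.filter fun a => ConnectedIn t₁ t₂ (Finset.univ \ {f}) a (t₁ f)).image M1

/-- The capacity `y(f) = Σ_{e ∈ δ_E(V_f)} x(e)` induced on a tree edge `f` by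
capacities `x` on the edges of `G`. -/
noncomputable def treeCap {V E TV TE : Type*} [Fintype E] [Fintype TE]
    (g₁ g₂ : E → V) (t₁ t₂ : TE → TV) (M1 : TV → V) (L : Finset TV)
    (x : E → NNReal) (f : TE) : NNReal :=
  ∑ e ∈ cutEdges g₁ g₂ Finset.univ (compVerts t₁ t₂ M1 L f), x e

/-- `M^{-1}(F)`: tree edges `f` with `M2(f) ∩ F ≠ ∅`. -/
noncomputable def Minv {E TE : Type*} [Fintype TE] (M2 : TE → Finset E) (F : Finset E) :
    Finset TE :=
  Finset.univ.filter fun f => (M2 f ∩ F).Nonempty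

/-- `M(E') = ⋃_{f ∈ E'} M2(f)`. -/
noncomputable def Mimg {E TE : Type*} (M2 : TE → Finset E) (E' : Finset TE) : Finset E :=
  E'.biUnion M2

/-- The connected component containing `v` of the graph on `V` with edge set `H`. -/
noncomputable def Qcomp {V E : Type*} [Fintype V] (g₁ g₂ : E → V) (H : Finset E) (v : V) :
    Finset V :=
  Finset.univ.filter fun u => ConnectedIn g₁ g₂ H u v

/-- A vertex set `Q` is shattered (w.r.t. the tree and `M^{-1}(F)`): the leaves whose
`M1`-images lie in `Q` are not all in a single connected component of the tree with the
edges of `M^{-1}(F)` deleted. -/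
def IsShattered {V E TV TE : Type*} [Fintype TE] (t₁ t₂ : TE → TV) (M1 : TV → V)
    (L : Finset TV) (M2 : TE → Finset E) (F : Finset E) (Q : Finset V) : Prop :=
  ∃ a ∈ L, ∃ b ∈ L, M1 a ∈ Q ∧ M1 b ∈ Q ∧
    ¬ ConnectedIn t₁ t₂ (Finset.univ \ Minv M2 F) a b

/-- `Z_F`: the pairs `(A ∪ Q_{s_i}, B ∪ Q_{t_i})` over `i ∈ [k]` and pairs `(A, B)`
partitioning the union of the shattered components of `(V, H \ F)`, each shattered
component lying entirely in `A` or entirely in `B`, such that the two sets of the pair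
are disjoint. -/
def ZF {V E TV TE : Type*} [Fintype V] [Fintype TE] (g₁ g₂ : E → V) (t₁ t₂ : TE → TV)
    (M1 : TV → V) (L : Finset TV) (M2 : TE → Finset E) {k : ℕ} (st : Fin k → V × V)
    (H F : Finset E) : Set (Finset V × Finset V) :=
  { P | ∃ i : Fin k, ∃ A B : Finset V,
      Disjoint A B ∧
      A ∪ B = Finset.univ.filter
        (fun v => IsShattered t₁ t₂ M1 L M2 F (Qcomp g₁ g₂ (H \ F) v)) ∧
      (∀ v : V, IsShattered t₁ t₂ M1 L M2 F (Qcomp g₁ g₂ (H \ F) v) →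
        Qcomp g₁ g₂ (H \ F) v ⊆ A ∨ Qcomp g₁ g₂ (H \ F) v ⊆ B) ∧
      P.1 = A ∪ Qcomp g₁ g₂ (H \ F) (st i).1 ∧
      P.2 = B ∪ Qcomp g₁ g₂ (H \ F) (st i).2 ∧
      Disjoint P.1 P.2 }

/-- The number of shattered connected components of `(V, H \ F)`. -/
noncomputable def shatteredCount {V E TV TE : Type*} [Fintype V] [Fintype TE]
    (g₁ g₂ : E → V) (t₁ t₂ : TE → TV) (M1 : TV → V) (L : Finset TV)
    (M2 : TE → Finset E) (H F : Finset E) : ℕ :=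
  ((Finset.univ.image fun v => Qcomp g₁ g₂ (H \ F) v).filter
    fun Q => IsShattered t₁ t₂ M1 L M2 F Q).card

section Aux

variable {V E TV TE : Type*}

lemma connectedIn_symm {g₁ g₂ : E → V} {H : Finset E} {u v : V}
    (h : ConnectedIn g₁ g₂ H u v) : ConnectedIn g₁ g₂ H v u :=
  Std.Symm.symm (self := @Relation.ReflTransGen.symmetric _ _ ⟨
    (fun _ _ hab => by obtain ⟨e, he, h'⟩ := hab; exact ⟨e, he, h'.symm⟩)⟩) _ _ h

/-- Which side of the tree edge `f` a vertex `v` is on. -/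
def Side [Fintype TE] (t₁ t₂ : TE → TV) (f : TE) (v : TV) : Prop :=
  ConnectedIn t₁ t₂ (Finset.univ \ {f}) v (t₁ f)

/-- The endpoint of `f` on the same side as `v`. -/
noncomputable def endp [Fintype TE] (t₁ t₂ : TE → TV) (f : TE) (v : TV) : TV :=
  if Side t₁ t₂ f v then t₁ f else t₂ f

lemma side_step [Fintype TE] {t₁ t₂ : TE → TV} {f e : TE} (hef : e ≠ f) {u v : TV}
    (h : (t₁ e = u ∧ t₂ e = v) ∨ (t₁ e = v ∧ t₂ e = u)) :
    (Side t₁ t₂ f u ↔ Side t₁ t₂ f v) := by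
  have hstep : ConnectedIn t₁ t₂ (Finset.univ \ {f}) u v :=
    Relation.ReflTransGen.single ⟨e, by simp [hef], h⟩
  exact ⟨fun hu => (connectedIn_symm hstep).trans hu, fun hv => hstep.trans hv⟩

lemma side_t1 [Fintype TE] {t₁ t₂ : TE → TV} (f : TE) : Side t₁ t₂ f (t₁ f) :=
  Relation.ReflTransGen.refl

lemma side_t2 [Fintype TE] {t₁ t₂ : TE → TV} (htree : IsTree' t₁ t₂) (f : TE) :
    ¬ Side t₁ t₂ f (t₂ f) := fun h => htree.2 f (connectedIn_symm h)

lemma endp_eq_of_iff [Fintype TE] {t₁ t₂ : TE → TV} {f : TE} {u v : TV}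
    (h : Side t₁ t₂ f u ↔ Side t₁ t₂ f v) : endp t₁ t₂ f u = endp t₁ t₂ f v := by
  unfold endp
  by_cases hu : Side t₁ t₂ f u
  · rw [if_pos hu, if_pos (h.mp hu)]
  · rw [if_neg hu, if_neg (fun hv => hu (h.mpr hv))]

lemma endp_t1 [Fintype TE] {t₁ t₂ : TE → TV} (f : TE) : endp t₁ t₂ f (t₁ f) = t₁ f :=
  if_pos (side_t1 f)

lemma endp_t2 [Fintype TE] {t₁ t₂ : TE → TV} (htree : IsTree' t₁ t₂) (f : TE) :
    endp t₁ t₂ f (t₂ f) = t₂ f := if_neg (side_t2 htree f)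

lemma endp_self_of_endpoint [Fintype TE] {t₁ t₂ : TE → TV} (htree : IsTree' t₁ t₂)
    {f : TE} {v : TV} (h : v = t₁ f ∨ v = t₂ f) : endp t₁ t₂ f v = v := by
  rcases h with h | h <;> subst h
  · exact endp_t1 f
  · exact endp_t2 htree f

lemma lemB' [Fintype TE] {t₁ t₂ : TE → TV} (htree : IsTree' t₁ t₂)
    {W : Finset TE} {f : TE} {a b : TV} (h : ConnectedIn t₁ t₂ W a b) :
    ((Side t₁ t₂ f a ↔ Side t₁ t₂ f b) → ConnectedIn t₁ t₂ (W \ {f}) a b) ∧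
    (¬(Side t₁ t₂ f a ↔ Side t₁ t₂ f b) →
      ConnectedIn t₁ t₂ (W \ {f}) a (endp t₁ t₂ f a) ∧
      ConnectedIn t₁ t₂ (W \ {f}) (endp t₁ t₂ f b) b) := by
  induction h using Relation.ReflTransGen.head_induction_on with
  | refl =>
    refine ⟨fun _ => Relation.ReflTransGen.refl, fun hiff => absurd Iff.rfl hiff⟩
  | head hstep htail ih =>
    rename_i a c
    obtain ⟨e, heW, hends⟩ := hstep
    by_cases hef : e = f
    · subst hef
      -- a and c are the two endpoints of f, on opposite sides
      have hac : ¬ (Side t₁ t₂ e a ↔ Side t₁ t₂ e c) := by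
        rcases hends with ⟨h1, h2⟩ | ⟨h1, h2⟩
        · subst h1; subst h2
          intro hiff; exact side_t2 htree e (hiff.mp (side_t1 e))
        · subst h1; subst h2
          intro hiff; exact side_t2 htree e (hiff.mpr (side_t1 e))
      have haend : a = t₁ e ∨ a = t₂ e := by
        rcases hends with ⟨h1, _⟩ | ⟨_, h2⟩
        · exact Or.inl h1.symm
        · exact Or.inr h2.symm
      have hcend : c = t₁ e ∨ c = t₂ e := by
        rcases hends with ⟨_, h2⟩ | ⟨h1, _⟩
        · exact Or.inr h2.symm
        · exact Or.inl h1.symm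
      constructor
      · intro hab
        have hcb : ¬ (Side t₁ t₂ e c ↔ Side t₁ t₂ e b) := by
          intro hcb; exact hac (hab.trans hcb.symm)
        obtain ⟨-, h2⟩ := ih.2 hcb
        have : endp t₁ t₂ e b = a := by
          rw [endp_eq_of_iff hab.symm, endp_self_of_endpoint htree haend]
        rwa [this] at h2
      · intro hab
        have hcb : Side t₁ t₂ e c ↔ Side t₁ t₂ e b := by
          by_contra hcb
          rcases haend with h | h <;> rcases hcend with h' | h' <;>
            subst h <;> subst h' <;> tauto
        have h1 := ih.1 hcb
        refine ⟨?_, ?_⟩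
        · rw [endp_self_of_endpoint htree haend]
          exact Relation.ReflTransGen.refl
        · have : endp t₁ t₂ e b = c := by
            rw [endp_eq_of_iff hcb.symm, endp_self_of_endpoint htree hcend]
          rwa [this]
    · -- e ≠ f : the step stays on the same side of f
      have hiff : Side t₁ t₂ f a ↔ Side t₁ t₂ f c := side_step hef hends
      have hstep' : ConnectedIn t₁ t₂ (W \ {f}) a c :=
        Relation.ReflTransGen.single ⟨e, by simp [Finset.mem_sdiff, heW, hef], hends⟩
      constructor
      · intro hab
        exact hstep'.trans (ih.1 (hiff.symm.trans hab))
      · intro hab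
        have hcb : ¬ (Side t₁ t₂ f c ↔ Side t₁ t₂ f b) := fun hcb =>
          hab (hiff.trans hcb)
        obtain ⟨h1, h2⟩ := ih.2 hcb
        refine ⟨?_, h2⟩
        rw [endp_eq_of_iff hiff]
        exact hstep'.trans h1

lemma lemA [Fintype TE] {t₁ t₂ : TE → TV} (htree : IsTree' t₁ t₂) (S : Finset TE)
    {a b : TV} (h : ∀ f ∈ S, (Side t₁ t₂ f a ↔ Side t₁ t₂ f b)) :
    ConnectedIn t₁ t₂ (Finset.univ \ S) a b := by
  induction S using Finset.induction_on with
  | empty => simpa using htree.1 a b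
  | @insert f S' hf ih =>
    have h' : ConnectedIn t₁ t₂ (Finset.univ \ S') a b :=
      ih fun f' hf' => h f' (Finset.mem_insert_of_mem hf')
    have := (lemB' htree h').1 (h f (Finset.mem_insert_self f S'))
    have heq : (Finset.univ \ S') \ {f} = Finset.univ \ insert f S' := by
      ext g; simp [Finset.mem_sdiff]; tauto
    rwa [heq] at this

lemma lemA' [Fintype TE] {t₁ t₂ : TE → TV} (htree : IsTree' t₁ t₂) (S : Finset TE)
    {a b : TV} (h : ¬ ConnectedIn t₁ t₂ (Finset.univ \ S) a b) :
    ∃ f ∈ S, ¬ (Side t₁ t₂ f a ↔ Side t₁ t₂ f b) := by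
  by_contra hc
  push_neg at hc
  exact h (lemA htree S fun f hf => hc f hf)

lemma lemC {g₁ g₂ : E → V} {W : Finset E} {S : Finset V} {u w : V}
    (h : ConnectedIn g₁ g₂ W u w) (hu : u ∈ S) (hw : w ∉ S) :
    ∃ e ∈ W, ((g₁ e ∈ S) ≠ (g₂ e ∈ S)) ∧ ConnectedIn g₁ g₂ W u (g₁ e) := by
  revert hu
  induction h using Relation.ReflTransGen.head_induction_on with
  | refl => exact fun hu => absurd hu hw
  | head hstep htail ih =>
    rename_i a c
    intro hu
    obtain ⟨e, heW, hends⟩ := hstep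
    by_cases hcS : c ∈ S
    · obtain ⟨e', he', hcross, hconn⟩ := ih hcS
      exact ⟨e', he', hcross, (Relation.ReflTransGen.single ⟨e, heW, hends⟩).trans hconn⟩
    · refine ⟨e, heW, ?_, ?_⟩
      · rcases hends with ⟨h1, h2⟩ | ⟨h1, h2⟩
        · subst h1; subst h2; intro hh; exact hcS (hh ▸ hu)
        · subst h1; subst h2; intro hh; exact hcS (hh.symm ▸ hu)
      · rcases hends with ⟨h1, _⟩ | ⟨h1, h2⟩
        · rw [h1]
          exact Relation.ReflTransGen.refl
        · rw [h1]
          exact Relation.ReflTransGen.single ⟨e, heW, Or.inr ⟨h1, h2⟩⟩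

lemma mem_Qcomp {g₁ g₂ : E → V} [Fintype V] {H : Finset E} {u v : V} :
    u ∈ Qcomp g₁ g₂ H v ↔ ConnectedIn g₁ g₂ H u v := by
  simp [Qcomp]

lemma Qcomp_eq_of_connected {g₁ g₂ : E → V} [Fintype V] {H : Finset E} {u v : V}
    (h : ConnectedIn g₁ g₂ H u v) : Qcomp g₁ g₂ H u = Qcomp g₁ g₂ H v := by
  ext w
  simp only [mem_Qcomp]
  exact ⟨fun hw => hw.trans h, fun hw => hw.trans (connectedIn_symm h)⟩

end Aux

/-- If every edge of `H` has capacity at least `α` and `F ⊆ H`, then the tree edges of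
`M⁻¹(F)` carry total induced capacity at least `α` times the number of shattered
components of `(V, H \ F)`. -/
theorem Minv_treeCap_ge_shatteredCount {V E TV TE : Type*}
    [Fintype V] [Fintype E] [Fintype TE]
    (g₁ g₂ : E → V) (t₁ t₂ : TE → TV) (htree : IsTree' t₁ t₂)
    (M1 : TV → V) (L : Finset TV) (hM1 : Set.BijOn M1 (↑L) Set.univ)
    (M2 : TE → Finset E)
    (hM2 : ∀ f : TE, ConnectedIn g₁ g₂ (M2 f) (M1 (t₁ f)) (M1 (t₂ f)))
    (α : NNReal) (x : E → NNReal) (H : Finset E) (hx : ∀ e ∈ H, α ≤ x e)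
    (F : Finset E) (hFH : F ⊆ H) :
    α * (shatteredCount g₁ g₂ t₁ t₂ M1 L M2 H F : NNReal) ≤
      ∑ f ∈ Minv M2 F, treeCap g₁ g₂ t₁ t₂ M1 L x f := by
  classical
  set S : Finset (Finset V) :=
    ((Finset.univ.image fun v => Qcomp g₁ g₂ (H \ F) v).filter
      fun Q => IsShattered t₁ t₂ M1 L M2 F Q) with hSdef
  -- the key existence statement for each shattered component
  have key : ∀ Q ∈ S, ∃ p : (_ : TE) × E, p.1 ∈ Minv M2 F ∧
      p.2 ∈ cutEdges g₁ g₂ Finset.univ (compVerts t₁ t₂ M1 L p.1) ∧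
      p.2 ∈ H ∧ Qcomp g₁ g₂ (H \ F) (g₁ p.2) = Q := by
    intro Q hQ
    rw [hSdef, Finset.mem_filter, Finset.mem_image] at hQ
    obtain ⟨⟨v₀, -, hv₀⟩, hsh⟩ := hQ
    obtain ⟨a, haL, b, hbL, haQ, hbQ, hnc⟩ := hsh
    obtain ⟨f, hfF, hfside⟩ := lemA' htree (Minv M2 F) hnc
    -- WLOG `Side f a` and `¬ Side f b`
    have main : ∀ a' b' : TV, a' ∈ L → b' ∈ L → M1 a' ∈ Q → M1 b' ∈ Q →
        Side t₁ t₂ f a' → ¬ Side t₁ t₂ f b' →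
        ∃ p : (_ : TE) × E, p.1 ∈ Minv M2 F ∧
          p.2 ∈ cutEdges g₁ g₂ Finset.univ (compVerts t₁ t₂ M1 L p.1) ∧
          p.2 ∈ H ∧ Qcomp g₁ g₂ (H \ F) (g₁ p.2) = Q := by
      intro a' b' haL hbL haQ hbQ hsa hsb
      have hain : M1 a' ∈ compVerts t₁ t₂ M1 L f := by
        rw [compVerts, Finset.mem_image]
        exact ⟨a', Finset.mem_filter.mpr ⟨haL, hsa⟩, rfl⟩
      have hbnotin : M1 b' ∉ compVerts t₁ t₂ M1 L f := by
        rw [compVerts, Finset.mem_image]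
        rintro ⟨c, hc, hcb⟩
        rw [Finset.mem_filter] at hc
        have : c = b' := hM1.injOn hc.1 hbL hcb
        exact hsb (this ▸ hc.2)
      -- M1 a' and M1 b' are connected in H \ F
      subst hv₀
      rw [mem_Qcomp] at haQ hbQ
      have hconn : ConnectedIn g₁ g₂ (H \ F) (M1 a') (M1 b') :=
        haQ.trans (connectedIn_symm hbQ)
      obtain ⟨e, heW, hcross, hconn'⟩ := lemC hconn hain hbnotin
      refine ⟨⟨f, e⟩, hfF, ?_, (Finset.mem_sdiff.mp heW).1, ?_⟩
      · rw [cutEdges, Finset.mem_filter]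
        exact ⟨Finset.mem_univ e, hcross⟩
      · exact Qcomp_eq_of_connected ((connectedIn_symm hconn').trans haQ)
    by_cases hsa : Side t₁ t₂ f a
    · have hsb : ¬ Side t₁ t₂ f b := fun hsb => hfside ⟨fun _ => hsb, fun _ => hsa⟩
      exact main a b haL hbL haQ hbQ hsa hsb
    · have hsb : Side t₁ t₂ f b := by
        by_contra hsb
        exact hfside ⟨fun h => absurd h hsa, fun h => absurd h hsb⟩
      exact main b a hbL haL hbQ haQ hsb hsa
  -- choose the pair for each shattered component
  rcases S.eq_empty_or_nonempty with hSe | hSne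
  · rw [shatteredCount, ← hSdef, hSe]
    simp
  · obtain ⟨Q₀, hQ₀⟩ := hSne
    obtain ⟨p₀, -⟩ := key Q₀ hQ₀
    have key' : ∀ Q : Finset V, ∃ p : (_ : TE) × E, Q ∈ S →
        p.1 ∈ Minv M2 F ∧
        p.2 ∈ cutEdges g₁ g₂ Finset.univ (compVerts t₁ t₂ M1 L p.1) ∧
        p.2 ∈ H ∧ Qcomp g₁ g₂ (H \ F) (g₁ p.2) = Q := by
      intro Q
      by_cases hQ : Q ∈ S
      · obtain ⟨p, hp⟩ := key Q hQ
        exact ⟨p, fun _ => hp⟩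
      · exact ⟨p₀, fun h => absurd h hQ⟩
    choose p hp using key'
    -- the big sigma set
    set T : Finset ((_ : TE) × E) :=
      (Minv M2 F).sigma (fun f => cutEdges g₁ g₂ Finset.univ (compVerts t₁ t₂ M1 L f))
      with hTdef
    have hsub : S.image p ⊆ T := by
      intro q hq
      rw [Finset.mem_image] at hq
      obtain ⟨Q, hQ, hpQ⟩ := hq
      obtain ⟨h1, h2, -, -⟩ := hp Q hQ
      rw [hTdef, Finset.mem_sigma]
      exact hpQ ▸ ⟨h1, h2⟩
    have hinj : Set.InjOn p ↑S := by
      intro Q1 hQ1 Q2 hQ2 hpq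
      obtain ⟨-, -, -, h4⟩ := hp Q1 hQ1
      obtain ⟨-, -, -, h4'⟩ := hp Q2 hQ2
      rw [← h4, ← h4', hpq]
    calc α * (shatteredCount g₁ g₂ t₁ t₂ M1 L M2 H F : NNReal)
        = ∑ _Q ∈ S, α := by
          rw [Finset.sum_const, shatteredCount, ← hSdef, nsmul_eq_mul, mul_comm]
      _ ≤ ∑ Q ∈ S, x ((p Q).2) := by
          refine Finset.sum_le_sum fun Q hQ => ?_
          exact hx _ (hp Q hQ).2.2.1
      _ = ∑ q ∈ S.image p, x q.2 := (Finset.sum_image (f := fun q : (_ : TE) × E => x q.2) (fun a ha b hb h => hinj ha hb h)).symm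
      _ ≤ ∑ q ∈ T, x q.2 := Finset.sum_le_sum_of_subset hsub
      _ = ∑ f ∈ Minv M2 F, treeCap g₁ g₂ t₁ t₂ M1 L x f := by
          rw [hTdef, Finset.sum_sigma]
          rfl
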